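/- Let U ⊆ X be open convex and f ∈ C^{1u}(U,Y). Suppose that for every U-bounded weakly p-Cauchy sequence (x_n) in U and every bounded weakly p-Cauchy sequence (h_n) in X, the sequence (f′(x_n)(h_n)) is norm convergent in Y. Then for every U-bounded weakly p-Cauchy sequence (x_n) and every weakly p-summable sequence (h_n) in X, lim_n sup_m ‖f′(x_m)(h_n)‖ = 0. -/

import Mathlib

open Filter Topology Metric Set
open scoped ENNReal NNReal

section Defs

variable {X Y : Type*} [NormedAddCommGroup X] [NormedSpace ℝ X]
  [NormedAddCommGroup Y] [NormedSpace ℝ Y]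

/-- A sequence `(x n)` in `X` is weakly `p`-summable if `(f (x n))ₙ ∈ ℓ_p` for every
continuous linear functional `f` (for `p = ∞`, this means `(f (x n))ₙ ∈ c₀`). -/
def WeaklyLpSummable (p : ℝ≥0∞) (x : ℕ → X) : Prop :=
  ∀ f : X →L[ℝ] ℝ,
    if p = ⊤ then Filter.Tendsto (fun n => f (x n)) Filter.atTop (nhds 0)
    else Memℓp (fun n => f (x n)) p

/-- A sequence is weakly `p`-Cauchy if all difference sequences along pairs of strictly
monotone index sequences are weakly `p`-summable. -/
def WeaklyLpCauchy (p : ℝ≥0∞) (x : ℕ → X) : Prop :=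
  ∀ m k : ℕ → ℕ, StrictMono m → StrictMono k →
    WeaklyLpSummable p (fun i => x (m i) - x (k i))

/-- `(x n)` is weakly `p`-convergent to `x₀` if `(x n - x₀)` is weakly `p`-summable. -/
def WeaklyLpConvergentTo (p : ℝ≥0∞) (x : ℕ → X) (x₀ : X) : Prop :=
  WeaklyLpSummable p (fun n => x n - x₀)

/-- A set `K ⊆ L(X,Y)` is uniformly `p`-convergent if `lim_n sup_{T ∈ K} ‖T (x n)‖ = 0`
for every weakly `p`-summable sequence `(x n)`. -/
def UniformlyPConvergent (p : ℝ≥0∞) (K : Set (X →L[ℝ] Y)) : Prop :=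
  ∀ x : ℕ → X, WeaklyLpSummable p x →
    ∀ ε > 0, ∃ N : ℕ, ∀ n ≥ N, ∀ T ∈ K, ‖T (x n)‖ < ε

/-- `B` is `U`-bounded: contained in `U`, bounded, and at positive distance from `∂U`. -/
def UBounded (U B : Set X) : Prop :=
  B ⊆ U ∧ Bornology.IsBounded B ∧ ∃ r > 0, ∀ b ∈ B, Metric.ball b r ⊆ U

/-- A sequence is `U`-bounded if its range is a `U`-bounded set. -/
def UBoundedSeq (U : Set X) (x : ℕ → X) : Prop :=
  UBounded U (Set.range x)

/-- `f ∈ C^{1u}(U,Y)`: `f` is differentiable on `U` with derivative `f'` which is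
uniformly continuous on `U`-bounded subsets of `U`. -/
def C1u (U : Set X) (f : X → Y) (f' : X → X →L[ℝ] Y) : Prop :=
  (∀ x ∈ U, HasFDerivAt f (f' x) x) ∧
  ∀ B : Set X, UBounded U B → UniformContinuousOn f' B

/-- `T` is a `p`-convergent operator: it maps weakly `p`-summable sequences to norm-null
sequences. -/
def PConvergentOp (p : ℝ≥0∞) (T : X →L[ℝ] Y) : Prop :=
  ∀ x : ℕ → X, WeaklyLpSummable p x →
    Filter.Tendsto (fun n => ‖T (x n)‖) Filter.atTop (nhds 0)

/-- `f` is weakly `p`-sequentially continuous on `U`: it maps `U`-bounded weakly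
`p`-Cauchy sequences to norm convergent sequences. -/
def WeaklyPSeqCont (p : ℝ≥0∞) (U : Set X) (f : X → Y) : Prop :=
  ∀ x : ℕ → X, UBoundedSeq U x → WeaklyLpCauchy p x →
    ∃ l : Y, Filter.Tendsto (fun n => f (x n)) Filter.atTop (nhds l)

/-- `K` is weakly `p`-precompact: every sequence in `K` has a weakly `p`-Cauchy
subsequence. -/
def WeaklyPPrecompact (p : ℝ≥0∞) (K : Set X) : Prop :=
  ∀ x : ℕ → X, (∀ n, x n ∈ K) →
    ∃ m : ℕ → ℕ, StrictMono m ∧ WeaklyLpCauchy p (fun i => x (m i))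

end Defs

section AuxLemmas

variable {X : Type*} [NormedAddCommGroup X] [NormedSpace ℝ X]

lemma aux_memℓp_comp_injective {q : ℝ≥0∞} {a : ℕ → ℝ} (ha : Memℓp a q)
    {φ : ℕ → ℕ} (hφ : Function.Injective φ) : Memℓp (fun i => a (φ i)) q := by
  rcases ENNReal.trichotomy q with h | h | h
  · subst h
    rw [memℓp_zero_iff] at ha ⊢
    have : {i | a (φ i) ≠ 0} ⊆ φ ⁻¹' {j | a j ≠ 0} := fun i hi => hi
    exact (ha.preimage hφ.injOn).subset this
  · subst h
    rw [memℓp_infty_iff] at ha ⊢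
    exact ha.mono (Set.range_comp_subset_range φ (fun i => ‖a i‖))
  · have hq0 : q ≠ 0 := by
      intro h0; rw [h0] at h; simp at h
    have hqT : q ≠ ⊤ := by
      intro h0; rw [h0] at h; simp at h
    rw [memℓp_gen_iff h] at ha ⊢
    exact ha.comp_injective hφ

lemma aux_wls_comp_injective {p : ℝ≥0∞} {x : ℕ → X} (h : WeaklyLpSummable p x)
    {φ : ℕ → ℕ} (hφ : Function.Injective φ) : WeaklyLpSummable p (fun i => x (φ i)) := by
  intro f
  have hf := h f
  by_cases hT : p = ⊤
  · rw [if_pos hT] at hf ⊢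
    exact hf.comp hφ.nat_tendsto_atTop
  · rw [if_neg hT] at hf ⊢
    exact aux_memℓp_comp_injective hf hφ

lemma aux_wls_sub {p : ℝ≥0∞} {x y : ℕ → X} (hx : WeaklyLpSummable p x)
    (hy : WeaklyLpSummable p y) : WeaklyLpSummable p (fun i => x i - y i) := by
  intro f
  have hfx := hx f
  have hfy := hy f
  by_cases hT : p = ⊤
  · rw [if_pos hT] at hfx hfy ⊢
    simpa using hfx.sub hfy
  · rw [if_neg hT] at hfx hfy ⊢
    have := hfx.sub hfy
    convert this using 1
    funext i
    simp [Pi.sub_apply]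

lemma aux_wls_weaklyLpCauchy {p : ℝ≥0∞} {x : ℕ → X} (h : WeaklyLpSummable p x) :
    WeaklyLpCauchy p x := by
  intro m k hm hk
  exact aux_wls_sub (aux_wls_comp_injective h hm.injective)
    (aux_wls_comp_injective h hk.injective)

lemma aux_wls_zero {p : ℝ≥0∞} : WeaklyLpSummable p (fun _ : ℕ => (0 : X)) := by
  intro f
  by_cases hT : p = ⊤
  · rw [if_pos hT]
    simpa using tendsto_const_nhds
  · rw [if_neg hT]
    have : (fun n : ℕ => f 0) = (0 : ∀ _ : ℕ, ℝ) := by funext n; simp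
    rw [this]
    exact zero_memℓp

lemma aux_wls_isBounded {p : ℝ≥0∞} {x : ℕ → X} (h : WeaklyLpSummable p x) :
    Bornology.IsBounded (Set.range x) := by
  have key : ∀ f : StrongDual ℝ X, ∃ C, ∀ n, ‖f (x n)‖ ≤ C := by
    intro f
    have hf := h f
    by_cases hT : p = ⊤
    · rw [if_pos hT] at hf
      have : Tendsto (fun n => ‖f (x n)‖) atTop (𝓝 ‖(0:ℝ)‖) := hf.norm
      obtain ⟨C, hC⟩ := this.bddAbove_range
      exact ⟨C, fun n => hC ⟨n, rfl⟩⟩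
    · rw [if_neg hT] at hf
      obtain ⟨C, hC⟩ := memℓp_infty_iff.1 (hf.of_exponent_ge le_top)
      exact ⟨C, fun n => hC ⟨n, rfl⟩⟩
  set g : ℕ → StrongDual ℝ X →L[ℝ] ℝ :=
    fun n => NormedSpace.inclusionInDoubleDual ℝ X (x n) with hg
  have hgb : ∀ f, ∃ C, ∀ n, ‖g n f‖ ≤ C := by
    intro f
    obtain ⟨C, hC⟩ := key f
    exact ⟨C, fun n => by simpa [hg, NormedSpace.dual_def] using hC n⟩
  obtain ⟨C', hC'⟩ := banach_steinhaus hgb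
  rw [Metric.isBounded_iff_subset_closedBall 0]
  refine ⟨C', ?_⟩
  rintro _ ⟨n, rfl⟩
  have hnorm : ‖x n‖ = ‖g n‖ :=
    ((NormedSpace.inclusionInDoubleDualLi ℝ (E := X)).norm_map (x n)).symm
  simp only [Metric.mem_closedBall, dist_zero_right]
  rw [hnorm]
  exact hC' n

lemma aux_wls_pad {p : ℝ≥0∞} (hp0 : p ≠ 0) {b : ℕ → X} (h : WeaklyLpSummable p b) :
    WeaklyLpSummable p (fun i => if i % 2 = 0 then b (i / 2) else 0) := by
  intro f
  have hf := h f
  by_cases hT : p = ⊤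
  · rw [if_pos hT] at hf ⊢
    have hdiv : Tendsto (fun i : ℕ => i / 2) atTop atTop :=
      Filter.tendsto_atTop_atTop.2 fun b => ⟨2 * b, fun n hn => by omega⟩
    have hcomp : Tendsto (fun i : ℕ => ‖f (b (i / 2))‖) atTop (𝓝 0) := by
      have := (hf.comp hdiv).norm
      simpa using this
    refine squeeze_zero_norm (fun i => ?_) hcomp
    by_cases hi : i % 2 = 0
    · simp [hi]
    · simp [hi]
  · rw [if_neg hT] at hf ⊢
    have hq : 0 < p.toReal := ENNReal.toReal_pos hp0 hT
    rw [memℓp_gen_iff hq] at hf ⊢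
    have hinj : Function.Injective (fun j : ℕ => 2 * j) := fun a b hab => by
      have : 2 * a = 2 * b := hab
      omega
    have hzero : ∀ i ∉ Set.range (fun j : ℕ => 2 * j),
        ‖f (if i % 2 = 0 then b (i / 2) else 0)‖ ^ p.toReal = 0 := by
      intro i hi
      have : i % 2 ≠ 0 := by
        intro h0
        refine hi ⟨i / 2, ?_⟩
        show 2 * (i / 2) = i
        omega
      simp [this, Real.zero_rpow hq.ne']
    rw [← Function.Injective.summable_iff hinj hzero]
    have hcomp : ((fun i => ‖f (if i % 2 = 0 then b (i / 2) else 0)‖ ^ p.toReal) ∘ fun j : ℕ => 2 * j)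
        = fun j => ‖f (b j)‖ ^ p.toReal := by
      funext j
      have h1 : (2 * j) % 2 = 0 := by omega
      have h2 : (2 * j) / 2 = j := by omega
      simp [Function.comp, h1, h2]
    rw [hcomp]
    exact hf

lemma aux_wls_even_odd {p : ℝ≥0∞} (hp0 : p ≠ 0) {z : ℕ → X}
    (he : WeaklyLpSummable p (fun k => z (2 * k)))
    (ho : WeaklyLpSummable p (fun k => z (2 * k + 1))) : WeaklyLpSummable p z := by
  intro f
  have h1 := he f
  have h2 := ho f
  by_cases hT : p = ⊤
  · rw [if_pos hT] at h1 h2 ⊢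
    rw [Metric.tendsto_atTop] at h1 h2 ⊢
    intro ε hε
    obtain ⟨N1, hN1⟩ := h1 ε hε
    obtain ⟨N2, hN2⟩ := h2 ε hε
    refine ⟨2 * N1 + 2 * N2 + 2, fun n hn => ?_⟩
    rcases Nat.even_or_odd n with ⟨k, hk⟩ | ⟨k, hk⟩
    · have hk' : n = 2 * k := by omega
      rw [hk']
      exact hN1 k (by omega)
    · have hk' : n = 2 * k + 1 := by omega
      rw [hk']
      exact hN2 k (by omega)
  · rw [if_neg hT] at h1 h2 ⊢
    have hq : 0 < p.toReal := ENNReal.toReal_pos hp0 hT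
    rw [memℓp_gen_iff hq] at h1 h2 ⊢
    exact Summable.even_add_odd h1 h2

lemma aux_ubounded_subset {U B B' : Set X} (h : UBounded U B') (hBB : B ⊆ B') :
    UBounded U B := by
  obtain ⟨h1, h2, r, hr, hball⟩ := h
  exact ⟨hBB.trans h1, h2.subset hBB, r, hr, fun b hb => hball b (hBB hb)⟩

end AuxLemmas


set_option maxHeartbeats 1000000 in
/-- If `(f' (x n) (h n))` converges for all `U`-bounded weakly `p`-Cauchy `(x n)` and
bounded weakly `p`-Cauchy `(h n)`, then `lim_n sup_m ‖f' (x m) (h n)‖ = 0` for every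
`U`-bounded weakly `p`-Cauchy `(x n)` and weakly `p`-summable `(h n)`. -/
theorem deriv_pairing_convergent_imp_uniform_limit
    {X Y : Type*} [NormedAddCommGroup X] [NormedSpace ℝ X] [CompleteSpace X]
    [NormedAddCommGroup Y] [NormedSpace ℝ Y] [CompleteSpace Y]
    (p : ℝ≥0∞) (hp : 1 ≤ p)
    (U : Set X) (hU : IsOpen U) (hUc : Convex ℝ U)
    (f : X → Y) (f' : X → X →L[ℝ] Y) (hf : C1u U f f')
    (H : ∀ x : ℕ → X, UBoundedSeq U x → WeaklyLpCauchy p x →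
      ∀ h : ℕ → X, Bornology.IsBounded (Set.range h) → WeaklyLpCauchy p h →
        ∃ l : Y, Filter.Tendsto (fun n => f' (x n) (h n)) Filter.atTop (nhds l)) :
    ∀ x : ℕ → X, UBoundedSeq U x → WeaklyLpCauchy p x →
      ∀ h : ℕ → X, WeaklyLpSummable p h →
        ∀ ε > 0, ∃ N : ℕ, ∀ n ≥ N, ∀ m : ℕ, ‖f' (x m) (h n)‖ < ε := by
  intro x hxU hxC h hWLS ε hε
  by_contra hcon
  push_neg at hcon
  have hp0 : p ≠ 0 := by
    intro h0; rw [h0] at hp; exact absurd hp (by simp)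
  obtain ⟨φ, hφ, hφP⟩ := Nat.exists_strictMono_subsequence
    (P := fun n => ∃ m, ε ≤ ‖f' (x m) (h n)‖)
    (fun N => by
      obtain ⟨n, hn, mm, hmm⟩ := hcon (N + 1)
      exact ⟨n, by omega, mm, hmm⟩)
  choose m hm using hφP
  have hsub : ∃ ψ : ℕ → ℕ, StrictMono ψ ∧
      (StrictMono (fun k => m (ψ k)) ∨ ∃ c, ∀ k, m (ψ k) = c) := by
    by_cases hfin : ∃ c, ∀ N, ∃ k ≥ N, m k = c
    · obtain ⟨c, hc⟩ := hfin
      obtain ⟨ψ, hψ, hψc⟩ := extraction_of_frequently_atTop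
        (P := fun k => m k = c) (Filter.frequently_atTop.2 hc)
      exact ⟨ψ, hψ, Or.inr ⟨c, hψc⟩⟩
    · push_neg at hfin
      choose g hg using hfin
      have hbig : ∀ C N₀, ∃ k ≥ N₀, C < m k := by
        intro C N₀
        refine ⟨max N₀ ((Finset.range (C + 1)).sup g), le_max_left _ _, ?_⟩
        by_contra hle
        push_neg at hle
        exact hg (m (max N₀ ((Finset.range (C + 1)).sup g))) _
          (le_trans (Finset.le_sup (Finset.mem_range.2 (by omega))) (le_max_right _ _)) rfl
      have step : ∀ j : ℕ, ∃ k, j < k ∧ m j < m k := by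
        intro j
        obtain ⟨k, hk1, hk2⟩ := hbig (m j) (j + 1)
        exact ⟨k, by omega, hk2⟩
      choose nxt hnxt1 hnxt2 using step
      refine ⟨fun k => nxt^[k] 0, ?_, Or.inl ?_⟩
      · refine strictMono_nat_of_lt_succ (fun k => ?_)
        show nxt^[k] 0 < nxt^[k + 1] 0
        rw [Function.iterate_succ_apply']
        exact hnxt1 _
      · refine strictMono_nat_of_lt_succ (fun k => ?_)
        show m (nxt^[k] 0) < m (nxt^[k + 1] 0)
        rw [Function.iterate_succ_apply']
        exact hnxt2 _
  obtain ⟨ψ, hψ, hMcase⟩ := hsub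
  set M : ℕ → ℕ := fun k => m (ψ k) with hMdef
  set nn : ℕ → ℕ := fun k => φ (ψ k) with hnndef
  have hnns : StrictMono nn := hφ.comp hψ
  have hεM : ∀ k, ε ≤ ‖f' (x (M k)) (h (nn k))‖ := fun k => hm (ψ k)
  set a : ℕ → X := fun i => x (M (i / 2)) with ha
  set b : ℕ → X := fun i => if i % 2 = 0 then h (nn (i / 2)) else 0 with hb
  have haU : UBoundedSeq U a :=
    aux_ubounded_subset hxU (by rintro _ ⟨i, rfl⟩; exact ⟨M (i / 2), rfl⟩)
  have haC : WeaklyLpCauchy p a := by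
    intro s t hs ht
    rcases hMcase with hMs | ⟨c, hc⟩
    · have inner_s : StrictMono (fun k => s (2 * k) / 2) :=
        strictMono_nat_of_lt_succ (fun k => by
          have h1 : s (2 * k) < s (2 * k + 1) := hs (by omega)
          have h2 : s (2 * k + 1) < s (2 * (k + 1)) := hs (by omega)
          omega)
      have inner_t : StrictMono (fun k => t (2 * k) / 2) :=
        strictMono_nat_of_lt_succ (fun k => by
          have h1 : t (2 * k) < t (2 * k + 1) := ht (by omega)
          have h2 : t (2 * k + 1) < t (2 * (k + 1)) := ht (by omega)
          omega)
      have inner_s' : StrictMono (fun k => s (2 * k + 1) / 2) :=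
        strictMono_nat_of_lt_succ (fun k => by
          have h1 : s (2 * k + 1) < s (2 * k + 2) := hs (by omega)
          have h2 : s (2 * k + 2) < s (2 * (k + 1) + 1) := hs (by omega)
          omega)
      have inner_t' : StrictMono (fun k => t (2 * k + 1) / 2) :=
        strictMono_nat_of_lt_succ (fun k => by
          have h1 : t (2 * k + 1) < t (2 * k + 2) := ht (by omega)
          have h2 : t (2 * k + 2) < t (2 * (k + 1) + 1) := ht (by omega)
          omega)
      refine aux_wls_even_odd hp0 ?_ ?_
      · exact hxC _ _ (hMs.comp inner_s) (hMs.comp inner_t)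
      · exact hxC _ _ (hMs.comp inner_s') (hMs.comp inner_t')
    · have hzero : (fun i => a (s i) - a (t i)) = fun _ => (0 : X) := by
        funext i
        simp [ha, hMdef, hc, sub_self]
      rw [hzero]
      exact aux_wls_zero
  have hbW : WeaklyLpSummable p b :=
    aux_wls_pad (b := fun k => h (nn k)) hp0
      (aux_wls_comp_injective hWLS hnns.injective)
  have hbC : WeaklyLpCauchy p b := aux_wls_weaklyLpCauchy hbW
  have hbB : Bornology.IsBounded (Set.range b) := by
    have hhB := aux_wls_isBounded hWLS
    have hsub2 : Set.range b ⊆ Set.range h ∪ {0} := by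
      rintro _ ⟨i, rfl⟩
      by_cases hi : i % 2 = 0
      · exact Or.inl ⟨nn (i / 2), by simp [hb, hi]⟩
      · exact Or.inr (by simp [hb, hi])
    exact (hhB.union Bornology.isBounded_singleton).subset hsub2
  obtain ⟨l, hl⟩ := H a haU haC b hbB hbC
  have hmono1 : StrictMono (fun k : ℕ => 2 * k + 1) :=
    strictMono_nat_of_lt_succ (fun k => by omega)
  have hmono0 : StrictMono (fun k : ℕ => 2 * k) :=
    strictMono_nat_of_lt_succ (fun k => by omega)
  have hodd : Tendsto (fun k => f' (a (2 * k + 1)) (b (2 * k + 1))) atTop (𝓝 l) :=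
    hl.comp hmono1.tendsto_atTop
  have hl0 : l = 0 := by
    have hz : (fun k => f' (a (2 * k + 1)) (b (2 * k + 1))) = fun _ => (0 : Y) := by
      funext k
      have hk : (2 * k + 1) % 2 = 1 := by omega
      simp [hb, hk]
    rw [hz] at hodd
    exact tendsto_nhds_unique hodd tendsto_const_nhds
  have heven : Tendsto (fun k => f' (a (2 * k)) (b (2 * k))) atTop (𝓝 (0 : Y)) := by
    have := hl.comp hmono0.tendsto_atTop
    rwa [hl0] at this
  have heq : (fun k => f' (a (2 * k)) (b (2 * k))) = fun k => f' (x (M k)) (h (nn k)) := by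
    funext k
    have h1 : (2 * k) % 2 = 0 := by omega
    have h2 : (2 * k) / 2 = k := by omega
    simp [ha, hb, h1, h2]
  rw [heq] at heven
  have hnorm : Tendsto (fun k => ‖f' (x (M k)) (h (nn k))‖) atTop (𝓝 (0 : ℝ)) := by
    simpa using heven.norm
  obtain ⟨k, hk⟩ := (hnorm.eventually (gt_mem_nhds hε)).exists
  exact absurd (hεM k) (not_le.2 hk)
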